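/- arXiv:1812.11254 — 2 statements merged into one kernel-verified Lean document; each statement's English description precedes it below -/
import Mathlib

section
/- Let V be a finite vertex set and let G and G' be simple graphs on V with E(G) ⊆ E(G'). Let C : V → Fin c be a proper coloring of G, and let S ⊆ V be a set of vertices such that every edge of G' that is not an edge of G has at least one endpoint in S (i.e., S is a vertex cover of the newly added edges). Then G' admits a proper coloring C' : V → Fin (c + |S|) such that C'(v) agrees with C(v) (under the canonical embedding Fin c ↪ Fin (c + |S|)) for every vertex v ∉ S. -/
/-- Recoloring step: given `G ≤ G'`, a proper `c`-coloring `C` of `G`, and a set `S`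
covering all newly added edges, `G'` has a proper `(c + |S|)`-coloring agreeing with
`C` outside `S`. -/
theorem dynamic_recoloring {V : Type*} [Fintype V] (G G' : SimpleGraph V)
    (hsub : G ≤ G') {c : ℕ} (C : G.Coloring (Fin c)) (S : Finset V)
    (hcov : ∀ u v : V, G'.Adj u v → ¬ G.Adj u v → u ∈ S ∨ v ∈ S) :
    ∃ C' : G'.Coloring (Fin (c + S.card)),
      ∀ v : V, v ∉ S → C' v = Fin.castAdd S.card (C v) := by
  classical
  set e := S.equivFin with he
  set f : V → Fin (c + S.card) := fun v =>
    if h : v ∈ S then Fin.natAdd c (e ⟨v, h⟩) else Fin.castAdd S.card (C v) with hf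
  have hvalid : ∀ u v, G'.Adj u v → f u ≠ f v := by
    intro u v hadj
    simp only [hf]
    by_cases hu : u ∈ S <;> by_cases hv : v ∈ S <;> simp [hu, hv]
    · intro h
      exact G'.ne_of_adj hadj h
    · intro h
      have := congrArg Fin.val h
      simp [Fin.val] at this
      omega
    · intro h
      have := congrArg Fin.val h
      simp [Fin.val] at this
      omega
    · have hG : G.Adj u v := by
        by_contra hnG
        rcases hcov u v hadj hnG with h | h <;> [exact hu h; exact hv h]
      intro h
      exact C.valid hG h
  exact ⟨SimpleGraph.Coloring.mk f (fun h => hvalid _ _ h), fun v hv => dif_neg hv⟩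
end

section
/- Let V be a finite vertex set and let G and G' be simple graphs on V with E(G) ⊆ E(G') and such that the number of edges of G' that are not edges of G is at most k. Let C : V → Fin c be a proper coloring of G. Then there exists a proper coloring C' : V → Fin (c + k) of G' such that C'(v) differs from C(v) (under the canonical embedding Fin c ↪ Fin (c + k)) for at most k vertices v. -/
/-- If `G'` is obtained from `G` by adding at most `k` edges, then any proper
`c`-coloring of `G` can be turned into a proper `(c + k)`-coloring of `G'` by
recoloring at most `k` vertices. -/
theorem dynamic_coloring_hamming {V : Type*} [Fintype V] [DecidableEq V]
    (G G' : SimpleGraph V) (hsub : G ≤ G') (k : ℕ)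
    (hk : (G'.edgeSet \ G.edgeSet).ncard ≤ k) {c : ℕ} (C : G.Coloring (Fin c)) :
    ∃ C' : G'.Coloring (Fin (c + k)),
      (Finset.univ.filter fun v : V => C' v ≠ Fin.castAdd k (C v)).card ≤ k := by
  classical
  set T : Set (Sym2 V) := G'.edgeSet \ G.edgeSet with hT
  have hTfin : T.Finite := Set.toFinite T
  set s : Finset V := hTfin.toFinset.image (fun e => (Quot.out e).1) with hs
  have hscard : s.card ≤ k := by
    calc s.card ≤ hTfin.toFinset.card := Finset.card_image_le
    _ = T.ncard := (Set.ncard_eq_toFinset_card T hTfin).symm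
    _ ≤ k := hk
  -- cover property
  have hcover : ∀ u v : V, G'.Adj u v → ¬ G.Adj u v → u ∈ s ∨ v ∈ s := by
    intro u v hadj hnadj
    have he : s(u, v) ∈ T := ⟨hadj, by simpa using hnadj⟩
    have hmem : (Quot.out s(u, v)).1 ∈ s := by
      rw [hs]
      exact Finset.mem_image_of_mem _ (hTfin.mem_toFinset.mpr he)
    have : (Quot.out s(u, v)).1 ∈ s(u, v) := Sym2.out_fst_mem _
    rcases Sym2.mem_iff.mp this with h | h
    · exact Or.inl (h ▸ hmem)
    · exact Or.inr (h ▸ hmem)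
  -- injection of s into Fin k
  have hemb : Nonempty ((↥s) ↪ Fin k) := by
    apply Function.Embedding.nonempty_of_card_le
    simpa [Fintype.card_coe] using hscard
  obtain ⟨f⟩ := hemb
  let col : V → Fin (c + k) := fun v =>
    if h : v ∈ s then Fin.natAdd c (f ⟨v, h⟩) else Fin.castAdd k (C v)
  have hvalid : ∀ {u v : V}, G'.Adj u v → col u ≠ col v := by
    intro u v hadj
    simp only [col]
    by_cases hu : u ∈ s <;> by_cases hv : v ∈ s <;> simp [hu, hv]
    · intro h
      exact hadj.ne h
    · intro h
      have h1 : c + (f ⟨u, hu⟩ : Fin k).1 = ((C v) : Fin c).1 := congrArg Fin.val h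
      omega
    · intro h
      have h1 : ((C u) : Fin c).1 = c + (f ⟨v, hv⟩ : Fin k).1 := congrArg Fin.val h
      omega
    · have hG : G.Adj u v := by
        by_contra hn
        rcases hcover u v hadj hn with h | h
        · exact hu h
        · exact hv h
      intro h
      have h1 : ((C u) : Fin c).1 = ((C v) : Fin c).1 := by
        have := congrArg Fin.val h
        simpa using this
      exact C.valid hG (Fin.ext h1)
  exact ⟨SimpleGraph.Coloring.mk col hvalid, by
    apply le_trans _ hscard
    apply Finset.card_le_card
    intro v hv
    simp only [Finset.mem_filter, Finset.mem_univ, true_and] at hv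
    by_contra hns
    exact hv (show col v = _ by simp [col, hns])⟩
end
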